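/- If X is a regular simplicial set and U is any simplicial set, then the internal hom Hom(U, X) is regular. -/

import Mathlib

open CategoryTheory Simplicial MonoidalCategory SSet Limits

universe u v

/-- A simplex is degenerate if it is the image of a degeneracy map. -/
def SDeg (X : SSet.{u}) : ∀ {n : ℕ}, X _⦋n⦌ → Prop
| 0, _ => False
| n + 1, x => ∃ (i : Fin (n + 1)) (y : X _⦋n⦌), x = X.map (SimplexCategory.σ i).op y

/-- The `i`-th elementary edge `X(φ(i,i+1))(x)` of a `p`-simplex `x`. -/
def elemEdge (X : SSet.{u}) {p : ℕ} (x : X _⦋p⦌) (i : Fin p) : X _⦋1⦌ :=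
  X.map (SimplexCategory.mkOfLe i.castSucc i.succ (Fin.castSucc_lt_succ (i := i)).le).op x

/-- A simplicial set is regular (property `P_1`) if any simplex with a degenerate
`i`-th elementary edge is an `i`-th degeneracy. -/
def SReg (X : SSet.{u}) : Prop :=
  ∀ (p : ℕ) (x : X _⦋p + 1⦌) (i : Fin (p + 1)),
    SDeg X (elemEdge X x i) → ∃ y : X _⦋p⦌, x = X.map (SimplexCategory.σ i).op y

/-- The internal hom of simplicial sets: its `p`-simplices are the
simplicial maps `Δ[p] ⊗ U ⟶ X`. -/
noncomputable def sHom (U X : SSet.{u}) : SSet.{u} where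
  obj m := stdSimplex.obj m.unop ⊗ U ⟶ X
  map φ := TypeCat.ofHom fun f => (SSet.stdSimplex.map φ.unop ▷ U) ≫ f
  map_id m := by ext f : 3; simp [(SSet.stdSimplex).map_id]
  map_comp φ ψ := by ext f : 3; simp [(SSet.stdSimplex).map_comp]

lemma succAbove_val' {n : ℕ} (p : Fin (n+1)) (k : Fin n) :
    ((p.succAbove k : Fin (n+1)) : ℕ) = if (k:ℕ) < (p:ℕ) then (k:ℕ) else (k:ℕ)+1 := by
  rw [Fin.succAbove]
  split_ifs with h1 h2 h2 <;> simp_all [Fin.lt_def]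

lemma predAbove_val' {n : ℕ} (p : Fin n) (k : Fin (n+1)) :
    ((p.predAbove k : Fin n) : ℕ) = if (p:ℕ) < (k:ℕ) then (k:ℕ)-1 else (k:ℕ) := by
  rw [Fin.predAbove]
  split_ifs with h1 h2 h2 <;>
    [skip; exact absurd (by exact_mod_cast h1) h2;
     exact absurd (Fin.lt_def.mpr (by exact_mod_cast h2)) h1; skip] <;>
    simp [Fin.lt_def]

lemma collapse_val' {p : ℕ} (i : Fin (p+1)) (b : Fin (p+2)) :
    (((SimplexCategory.σ i ≫ SimplexCategory.δ i.succ :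
        (⦋p+1⦌ : SimplexCategory) ⟶ ⦋p+1⦌).toOrderHom b) : ℕ)
      = if (b:ℕ) = (i:ℕ)+1 then (i:ℕ) else (b:ℕ) := by
  have hb := b.isLt
  have hi := i.isLt
  simp only [SimplexCategory.comp_toOrderHom, OrderHom.comp_coe, Function.comp_apply]
  show ((Fin.succAbove i.succ (Fin.predAbove i b)) : ℕ) = _
  rw [succAbove_val', predAbove_val']
  simp only [Fin.val_succ]
  split_ifs <;> omega

lemma collapse_id' {p m : ℕ} (i : Fin (p+1)) (α : (⦋m⦌ : SimplexCategory) ⟶ ⦋p+1⦌)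
    (hnone : ∀ k, α.toOrderHom k ≠ i.succ) :
    α ≫ SimplexCategory.σ i ≫ SimplexCategory.δ i.succ = α := by
  apply SimplexCategory.Hom.ext
  apply OrderHom.ext
  funext k
  apply Fin.ext
  have h1 : ((α ≫ SimplexCategory.σ i ≫ SimplexCategory.δ i.succ).toOrderHom k : ℕ)
      = ((SimplexCategory.σ i ≫ SimplexCategory.δ i.succ :
          (⦋p+1⦌ : SimplexCategory) ⟶ _).toOrderHom (α.toOrderHom k) : ℕ) := rfl
  have h2 : (α.toOrderHom k : ℕ) ≠ (i:ℕ)+1 := by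
    intro hk
    exact hnone k (Fin.ext (by simpa using hk))
  rw [h1, collapse_val', if_neg h2]

section
open SimplexCategory
variable {p m : ℕ} (i : Fin (p+1)) (α : (⦋m⦌ : SimplexCategory) ⟶ ⦋p+1⦌) (j₀ : Fin (m+1))

/-- value function of the auxiliary simplex -/
def gfun (k : Fin (m+2)) : Fin (p+2) :=
  if (k:ℕ) ≤ (j₀:ℕ) then
    ⟨min ((α.toOrderHom ⟨min (k:ℕ) m, by first | omega | (simp only [len_mk]; omega)⟩
        : Fin (p+2)) : ℕ) (i:ℕ), by
      have := i.isLt; omega⟩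
  else α.toOrderHom ⟨(k:ℕ)-1, by first | omega | (simp only [len_mk]; omega)⟩

lemma gfun_val (k : Fin (m+2)) :
    ((gfun i α j₀ k : Fin (p+2)) : ℕ)
      = if (k:ℕ) ≤ (j₀:ℕ)
        then min ((α.toOrderHom ⟨min (k:ℕ) m, by first | omega | (simp only [len_mk]; omega)⟩
          : Fin (p+2)) : ℕ) (i:ℕ)
        else ((α.toOrderHom ⟨(k:ℕ)-1, by first | omega | (simp only [len_mk]; omega)⟩
          : Fin (p+2)) : ℕ) := by
  rw [gfun]
  split_ifs <;> rfl

lemma gfun_mono' (hj₀ : α.toOrderHom j₀ = i.succ) : Monotone (gfun i α j₀) := by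
  intro k l hkl
  have hkl' : (k:ℕ) ≤ (l:ℕ) := hkl
  have hj₀m : (j₀:ℕ) ≤ m := by omega
  have hj₀v : ((α.toOrderHom j₀ : Fin (p+2)) : ℕ) = (i:ℕ)+1 := by rw [hj₀]; rfl
  have hmono : ∀ (a b : Fin (m+1)), (a:ℕ) ≤ (b:ℕ) →
      ((α.toOrderHom a : Fin (p+2)) : ℕ) ≤ ((α.toOrderHom b : Fin (p+2)) : ℕ) := by
    intro a b hab
    exact Fin.le_def.mp (α.toOrderHom.monotone (Fin.le_def.mpr hab))
  rw [Fin.le_def, gfun_val, gfun_val]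
  by_cases h1 : (k:ℕ) ≤ (j₀:ℕ) <;> by_cases h2 : (l:ℕ) ≤ (j₀:ℕ)
  · rw [if_pos h1, if_pos h2]
    have := hmono ⟨min (k:ℕ) m, by omega⟩ ⟨min (l:ℕ) m, by omega⟩
      (by first | omega | (simp only [Fin.val_mk]; omega))
    omega
  · rw [if_pos h1, if_neg h2]
    have := hmono j₀ ⟨(l:ℕ)-1, by omega⟩ (by first | omega | (simp only [Fin.val_mk]; omega))
    omega
  · omega
  · rw [if_neg h1, if_neg h2]
    exact hmono ⟨(k:ℕ)-1, by omega⟩ ⟨(l:ℕ)-1, by omega⟩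
      (by first | omega | (simp only [Fin.val_mk]; omega))

/-- the auxiliary `(m+1)`-simplex of `Δ[p+1]` -/
def bmap (hj₀ : α.toOrderHom j₀ = i.succ) : (⦋m+1⦌ : SimplexCategory) ⟶ ⦋p+1⦌ :=
  SimplexCategory.Hom.mk ⟨gfun i α j₀, gfun_mono' i α j₀ hj₀⟩

lemma bmap_val (hj₀ : α.toOrderHom j₀ = i.succ) (k : Fin (m+2)) :
    (((bmap i α j₀ hj₀).toOrderHom k : Fin (p+2)) : ℕ)
      = if (k:ℕ) ≤ (j₀:ℕ)
        then min ((α.toOrderHom ⟨min (k:ℕ) m, by first | omega | (simp only [len_mk]; omega)⟩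
          : Fin (p+2)) : ℕ) (i:ℕ)
        else ((α.toOrderHom ⟨(k:ℕ)-1, by first | omega | (simp only [len_mk]; omega)⟩
          : Fin (p+2)) : ℕ) := by
  show ((gfun i α j₀ k : Fin (p+2)) : ℕ) = _
  rw [gfun]
  split_ifs <;> rfl

end

set_option maxHeartbeats 2000000 in
open SimplexCategory in
lemma key (X U : SSet.{u}) (hX : SReg X) (p : ℕ) (i : Fin (p+1))
    (f : Δ[p+1] ⊗ U ⟶ X) (h : Δ[0] ⊗ U ⟶ X)
    (H : ∀ (n : SimplexCategoryᵒᵖ) (γ : n.unop ⟶ ⦋1⦌) (v : U.obj n),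
      f.app n (ULift.up (γ ≫ mkOfLe i.castSucc i.succ (Fin.castSucc_lt_succ (i := i)).le), v)
        = h.app n (ULift.up (γ ≫ σ 0), v)) :
    ∀ (c m : ℕ) (α : (⦋m⦌ : SimplexCategory) ⟶ ⦋p+1⦌) (u : U.obj (Opposite.op ⦋m⦌)),
      (Finset.univ.filter (fun k : Fin (m+1) => α.toOrderHom k = i.succ)).card ≤ c →
      f.app (Opposite.op ⦋m⦌) (ULift.up α, u)
        = f.app (Opposite.op ⦋m⦌) (ULift.up (α ≫ σ i ≫ δ i.succ), u) := by
  intro c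
  induction c with
  | zero =>
    intro m α u hcard
    have hnone : ∀ k : Fin (m+1), α.toOrderHom k ≠ i.succ := by
      intro k hk
      have hmem : k ∈ Finset.univ.filter (fun k : Fin (m+1) => α.toOrderHom k = i.succ) :=
        Finset.mem_filter.mpr ⟨Finset.mem_univ _, hk⟩
      have := Finset.card_pos.mpr ⟨k, hmem⟩
      omega
    rw [collapse_id' i α hnone]
  | succ c IH =>
    intro m α u hcard
    by_cases hex : ∃ k : Fin (m+1), α.toOrderHom k = i.succ
    case neg =>
      rw [collapse_id' i α (fun k hk => hex ⟨k, hk⟩)]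
    case pos =>
    classical
    set S := Finset.univ.filter (fun k : Fin (m+1) => α.toOrderHom k = i.succ) with hS
    have hne : S.Nonempty := ⟨hex.choose, Finset.mem_filter.mpr ⟨Finset.mem_univ _, hex.choose_spec⟩⟩
    set j₀ := S.min' hne with hj₀def
    have hj₀ : α.toOrderHom j₀ = i.succ := (Finset.mem_filter.mp (S.min'_mem hne)).2
    have hmin : ∀ k : Fin (m+1), α.toOrderHom k = i.succ → j₀ ≤ k :=
      fun k hk => S.min'_le k (Finset.mem_filter.mpr ⟨Finset.mem_univ _, hk⟩)
    -- numeric facts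
    have hip := i.isLt
    have hj₀m : (j₀:ℕ) ≤ m := by omega
    have hj₀v : ((α.toOrderHom j₀ : Fin (p+2)) : ℕ) = (i:ℕ)+1 := by rw [hj₀]; rfl
    have hmono : ∀ (a b : Fin (m+1)), (a:ℕ) ≤ (b:ℕ) →
        ((α.toOrderHom a : Fin (p+2)) : ℕ) ≤ ((α.toOrderHom b : Fin (p+2)) : ℕ) :=
      fun a b hab => Fin.le_def.mp (α.toOrderHom.monotone (Fin.le_def.mpr hab))
    have hlt : ∀ k : Fin (m+1), (k:ℕ) < (j₀:ℕ) → ((α.toOrderHom k : Fin (p+2)) : ℕ) ≤ (i:ℕ) := by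
      intro k hk
      have h1 := hmono k j₀ (le_of_lt hk)
      have h2 : ((α.toOrderHom k : Fin (p+2)) : ℕ) ≠ (i:ℕ)+1 := by
        intro e
        have : α.toOrderHom k = i.succ := Fin.ext (by simpa using e)
        have := Fin.le_def.mp (hmin k this)
        omega
      omega
    set β := bmap i α j₀ hj₀ with hβdef
    have hβv := bmap_val i α j₀ hj₀
    have hαcong : ∀ (a b : Fin (m+1)), (a:ℕ) = (b:ℕ) → α.toOrderHom a = α.toOrderHom b :=
      fun a b hab => congrArg _ (Fin.ext hab)
    -- value description of β
    have hβval : ∀ k : Fin (m+2),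
        ((β.toOrderHom k : Fin (p+2)) : ℕ)
          = if hk : (k:ℕ) < (j₀:ℕ) then ((α.toOrderHom ⟨(k:ℕ), by first | omega | (simp only [len_mk]; omega)⟩ : Fin (p+2)) : ℕ)
            else if (k:ℕ) = (j₀:ℕ) then (i:ℕ)
            else ((α.toOrderHom ⟨(k:ℕ)-1, by have := k.isLt; simp only [len_mk] at this ⊢; omega⟩
              : Fin (p+2)) : ℕ) := by
      intro k
      rw [hβv k]
      by_cases hk1 : (k:ℕ) < (j₀:ℕ)
      · rw [if_pos (le_of_lt hk1 : (k:ℕ) ≤ (j₀:ℕ)), dif_pos hk1]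
        have he : (⟨min (k:ℕ) m, by first | omega | (simp only [len_mk]; omega)⟩ : Fin (m+1))
            = ⟨(k:ℕ), by first | omega | (simp only [len_mk]; omega)⟩ := Fin.ext (by first | omega | (simp only [Fin.val_mk, len_mk]; omega) | (simp; omega))
        rw [hαcong _ _ (congrArg Fin.val he)]
        have := hlt ⟨(k:ℕ), by first | omega | (simp only [len_mk]; omega)⟩ hk1
        omega
      · rw [dif_neg hk1]
        by_cases hk2 : (k:ℕ) = (j₀:ℕ)
        · rw [if_pos (le_of_eq hk2 : (k:ℕ) ≤ (j₀:ℕ)), if_pos hk2]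
          have he : (⟨min (k:ℕ) m, by first | omega | (simp only [len_mk]; omega)⟩ : Fin (m+1)) = j₀ :=
            Fin.ext (by first | omega | (simp only [Fin.val_mk, len_mk]; omega) | (simp; omega))
          rw [hαcong _ _ (congrArg Fin.val he), hj₀v]
          omega
        · rw [if_neg (by omega : ¬ (k:ℕ) ≤ (j₀:ℕ)), if_neg hk2]
    -- Fact 1 : δ j₀.castSucc ≫ β = α
    have hF1 : δ j₀.castSucc ≫ β = α := by
      apply SimplexCategory.Hom.ext
      apply OrderHom.ext
      funext k
      apply Fin.ext
      have h0 : ((δ j₀.castSucc ≫ β).toOrderHom k : Fin (p+2))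
          = β.toOrderHom (j₀.castSucc.succAbove k) := rfl
      rw [h0, hβval]
      have htv : ((j₀.castSucc.succAbove k : Fin (m+2)) : ℕ)
          = if (k:ℕ) < (j₀:ℕ) then (k:ℕ) else (k:ℕ)+1 := by
        rw [succAbove_val']; simp
      by_cases hk1 : (k:ℕ) < (j₀:ℕ)
      · rw [if_pos hk1] at htv
        have hc : ((j₀.castSucc.succAbove k : Fin (m+2)) : ℕ) < (j₀:ℕ) := by omega
        rw [dif_pos hc]
        refine congrArg _ (hαcong _ _ ?_)
        simp only [Fin.val_mk, Fin.coe_castSucc, Fin.val_succ]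
        omega
      · rw [if_neg hk1] at htv
        have hc : ¬ ((j₀.castSucc.succAbove k : Fin (m+2)) : ℕ) < (j₀:ℕ) := by omega
        have hc2 : ¬ ((j₀.castSucc.succAbove k : Fin (m+2)) : ℕ) = (j₀:ℕ) := by omega
        rw [dif_neg hc, if_neg hc2]
        refine congrArg _ (hαcong _ _ ?_)
        simp only [Fin.val_mk, Fin.coe_castSucc, Fin.val_succ]
        omega
    -- α₁
    set α₁ : (⦋m⦌ : SimplexCategory) ⟶ ⦋p+1⦌ := δ j₀.succ ≫ β with hα₁def
    have hα₁v : ∀ k : Fin (m+1),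
        ((α₁.toOrderHom k : Fin (p+2)) : ℕ)
          = if (k:ℕ) = (j₀:ℕ) then (i:ℕ) else ((α.toOrderHom k : Fin (p+2)) : ℕ) := by
      intro k
      have h0 : ((α₁.toOrderHom k : Fin (p+2)) : ℕ)
          = ((β.toOrderHom (j₀.succ.succAbove k) : Fin (p+2)) : ℕ) := rfl
      rw [h0, hβval]
      have htv : ((j₀.succ.succAbove k : Fin (m+2)) : ℕ)
          = if (k:ℕ) < (j₀:ℕ)+1 then (k:ℕ) else (k:ℕ)+1 := by
        rw [succAbove_val']; simp
      by_cases hk1 : (k:ℕ) < (j₀:ℕ)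
      · rw [if_pos (by omega : (k:ℕ) < (j₀:ℕ)+1)] at htv
        have hc : ((j₀.succ.succAbove k : Fin (m+2)) : ℕ) < (j₀:ℕ) := by omega
        rw [dif_pos hc, if_neg (by omega : ¬ (k:ℕ) = (j₀:ℕ))]
        refine congrArg _ (hαcong _ _ ?_)
        simp only [Fin.val_mk, Fin.coe_castSucc, Fin.val_succ]
        omega
      · by_cases hk2 : (k:ℕ) = (j₀:ℕ)
        · rw [if_pos (by omega : (k:ℕ) < (j₀:ℕ)+1)] at htv
          have hc : ¬ ((j₀.succ.succAbove k : Fin (m+2)) : ℕ) < (j₀:ℕ) := by omega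
          have hc2 : ((j₀.succ.succAbove k : Fin (m+2)) : ℕ) = (j₀:ℕ) := by omega
          rw [dif_neg hc, if_pos hc2, if_pos hk2]
        · rw [if_neg (by omega : ¬ (k:ℕ) < (j₀:ℕ)+1)] at htv
          have hc : ¬ ((j₀.succ.succAbove k : Fin (m+2)) : ℕ) < (j₀:ℕ) := by omega
          have hc2 : ¬ ((j₀.succ.succAbove k : Fin (m+2)) : ℕ) = (j₀:ℕ) := by omega
          rw [dif_neg hc, if_neg hc2, if_neg hk2]
          exact congrArg _ (hαcong _ _ (by
            first | omega | (simp only [Fin.val_mk, Fin.coe_castSucc, Fin.val_succ, len_mk]; omega)))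
    -- cardinality decrease
    have hcard1 : (Finset.univ.filter (fun k : Fin (m+1) => α₁.toOrderHom k = i.succ)).card ≤ c := by
      have hsub : (Finset.univ.filter (fun k : Fin (m+1) => α₁.toOrderHom k = i.succ)) ⊆ S.erase j₀ := by
        intro k hk
        simp only [Finset.mem_filter, Finset.mem_univ, true_and] at hk
        have hkv : ((α₁.toOrderHom k : Fin (p+2)) : ℕ) = (i:ℕ)+1 := by rw [hk]; rfl
        rw [hα₁v k] at hkv
        by_cases hkj : (k:ℕ) = (j₀:ℕ)
        · rw [if_pos hkj] at hkv; omega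
        · rw [if_neg hkj] at hkv
          have hk' : α.toOrderHom k = i.succ := Fin.ext (by simpa using hkv)
          rw [Finset.mem_erase]
          exact ⟨fun e => hkj (congrArg Fin.val e), Finset.mem_filter.mpr ⟨Finset.mem_univ _, hk'⟩⟩
      have h1 := Finset.card_le_card hsub
      have h2 : (S.erase j₀).card = S.card - 1 := Finset.card_erase_of_mem (S.min'_mem hne)
      have h3 : 0 < S.card := Finset.card_pos.mpr hne
      omega
    -- collapse equality
    have hF2 : α₁ ≫ σ i ≫ δ i.succ = α ≫ σ i ≫ δ i.succ := by
      apply SimplexCategory.Hom.ext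
      apply OrderHom.ext
      funext k
      apply Fin.ext
      have hL : ((α₁ ≫ σ i ≫ δ i.succ).toOrderHom k : ℕ)
          = ((σ i ≫ δ i.succ : (⦋p+1⦌:SimplexCategory) ⟶ _).toOrderHom (α₁.toOrderHom k) : ℕ) :=
        rfl
      have hR : ((α ≫ σ i ≫ δ i.succ).toOrderHom k : ℕ)
          = ((σ i ≫ δ i.succ : (⦋p+1⦌:SimplexCategory) ⟶ _).toOrderHom (α.toOrderHom k) : ℕ) :=
        rfl
      rw [hL, hR, collapse_val', collapse_val', hα₁v]
      by_cases hkj : (k:ℕ) = (j₀:ℕ)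
      · have h2 : ((α.toOrderHom k : Fin (p+2)) : ℕ) = (i:ℕ)+1 := by
          rw [hαcong k j₀ hkj]; exact hj₀v
        rw [if_pos hkj]
        try split_ifs <;> omega
      · rw [if_neg hkj]
        try split_ifs <;> omega
    -- the auxiliary simplex of Hom
    set u' := U.map (σ j₀).op u with hu'def
    set x := f.app (Opposite.op ⦋m+1⦌) (ULift.up β, u') with hxdef
    set e := mkOfLe j₀.castSucc j₀.succ (Fin.castSucc_lt_succ (i := j₀)).le with hedef
    -- Fact 3 : e ≫ β = φ
    have hF3 : e ≫ β = mkOfLe i.castSucc i.succ (Fin.castSucc_lt_succ (i := i)).le := by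
      apply SimplexCategory.Hom.ext
      apply OrderHom.ext
      funext k
      fin_cases k
      · show β.toOrderHom j₀.castSucc = i.castSucc
        apply Fin.ext
        rw [hβval]
        rw [dif_neg (by simp), if_pos (by simp)]
        simp
      · show β.toOrderHom j₀.succ = i.succ
        apply Fin.ext
        rw [hβval]
        rw [dif_neg (by simp), if_neg (by simp)]
        have : α.toOrderHom ⟨((j₀.succ : Fin (m+2)) : ℕ) - 1, by first | omega | (simp only [len_mk]; omega)⟩
            = α.toOrderHom j₀ := hαcong _ _ (by simp)
        rw [this, hj₀v]
        simp
    -- degeneracy of the elementary edge of x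
    have hdegx : SDeg X (elemEdge X x j₀) := by
      set w := U.map (SimplexCategory.const ⦋0⦌ ⦋m⦌ j₀).op u with hwdef
      refine ⟨0, h.app (Opposite.op ⦋0⦌) (ULift.up (𝟙 (⦋0⦌ : SimplexCategory)), w), ?_⟩
      have hedge : elemEdge X x j₀
          = f.app (Opposite.op ⦋1⦌) (ULift.up (e ≫ β), U.map e.op u') :=
        (FunctorToTypes.naturality f e.op ((ULift.up β, u') : (Δ[p+1] ⊗ U) _⦋m+1⦌)).symm
      have hconst : e ≫ σ j₀ = σ (0 : Fin 1) ≫ SimplexCategory.const ⦋0⦌ ⦋m⦌ j₀ := by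
        apply SimplexCategory.Hom.ext
        apply OrderHom.ext
        funext k
        fin_cases k
        · show j₀.predAbove j₀.castSucc = j₀
          apply Fin.ext
          rw [predAbove_val']
          simp
        · show j₀.predAbove j₀.succ = j₀
          apply Fin.ext
          rw [predAbove_val']
          simp
      have hv : U.map e.op u' = U.map (σ (0 : Fin 1)).op w := by
        rw [hu'def, hwdef, ← FunctorToTypes.map_comp_apply, ← FunctorToTypes.map_comp_apply,
          ← op_comp, ← op_comp, hconst]
      rw [hedge, hF3, hv]
      have hH := H (Opposite.op ⦋1⦌) (𝟙 (⦋1⦌ : SimplexCategory)) (U.map (σ (0 : Fin 1)).op w)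
      rw [Category.id_comp, Category.id_comp] at hH
      rw [hH]
      exact FunctorToTypes.naturality h (σ (0 : Fin 1)).op ((ULift.up (𝟙 (⦋0⦌ : SimplexCategory)), w) : (Δ[0] ⊗ U) _⦋0⦌)
    -- apply regularity of X
    obtain ⟨y, hy⟩ := hX m x j₀ hdegx
    have hfaces : X.map (δ j₀.castSucc).op x = X.map (δ j₀.succ).op x := by
      rw [hy, ← FunctorToTypes.map_comp_apply, ← FunctorToTypes.map_comp_apply,
        ← op_comp, ← op_comp, SimplexCategory.δ_comp_σ_self, SimplexCategory.δ_comp_σ_succ]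
    have hL : X.map (δ j₀.castSucc).op x = f.app (Opposite.op ⦋m⦌) (ULift.up α, u) := by
      rw [hxdef, ← FunctorToTypes.naturality f (δ j₀.castSucc).op ((ULift.up β, u') : (Δ[p+1] ⊗ U) _⦋m+1⦌)]
      have e2 : U.map (δ j₀.castSucc).op u' = u := by
        rw [hu'def, ← FunctorToTypes.map_comp_apply, ← op_comp, SimplexCategory.δ_comp_σ_self, op_id,
          FunctorToTypes.map_id_apply]
      show f.app _ (ULift.up (δ j₀.castSucc ≫ β), U.map (δ j₀.castSucc).op u') = _
      rw [hF1, e2]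
    have hR : X.map (δ j₀.succ).op x = f.app (Opposite.op ⦋m⦌) (ULift.up α₁, u) := by
      rw [hxdef, ← FunctorToTypes.naturality f (δ j₀.succ).op ((ULift.up β, u') : (Δ[p+1] ⊗ U) _⦋m+1⦌)]
      have e2 : U.map (δ j₀.succ).op u' = u := by
        rw [hu'def, ← FunctorToTypes.map_comp_apply, ← op_comp, SimplexCategory.δ_comp_σ_succ, op_id,
          FunctorToTypes.map_id_apply]
      show f.app _ (ULift.up (δ j₀.succ ≫ β), U.map (δ j₀.succ).op u') = _
      rw [e2]
    calc f.app (Opposite.op ⦋m⦌) (ULift.up α, u)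
        = f.app (Opposite.op ⦋m⦌) (ULift.up α₁, u) := hL.symm.trans (hfaces.trans hR)
      _ = f.app (Opposite.op ⦋m⦌) (ULift.up (α₁ ≫ σ i ≫ δ i.succ), u) := IH m α₁ u hcard1
      _ = f.app (Opposite.op ⦋m⦌) (ULift.up (α ≫ σ i ≫ δ i.succ), u) := by rw [hF2]

/-- If `X` is regular then the internal hom `Hom(U, X)` is regular for every `U`. -/
theorem stmt_18 (X : SSet.{u}) (hX : SReg X) (U : SSet.{u}) : SReg (sHom U X) := by
  intro p f i hdeg
  obtain ⟨ι, h, heq⟩ := hdeg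
  have hι : ι = 0 := Fin.eq_zero ι
  subst hι
  have heq' : (SSet.stdSimplex.map
        (SimplexCategory.mkOfLe i.castSucc i.succ (Fin.castSucc_lt_succ (i := i)).le) ▷ U) ≫ f
      = (SSet.stdSimplex.map (SimplexCategory.σ (0 : Fin 1)) ▷ U) ≫ h := heq
  have H : ∀ (n : SimplexCategoryᵒᵖ) (γ : n.unop ⟶ SimplexCategory.mk 1) (v : U.obj n),
      f.app n (ULift.up (γ ≫ SimplexCategory.mkOfLe i.castSucc i.succ
          (Fin.castSucc_lt_succ (i := i)).le), v)
        = h.app n (ULift.up (γ ≫ SimplexCategory.σ 0), v) :=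
    fun n γ v => congrArg (fun (g : Δ[1] ⊗ U ⟶ X) => g.app n (ULift.up γ, v)) heq'
  refine ⟨(SSet.stdSimplex.map (SimplexCategory.δ i.succ) ▷ U) ≫ f, ?_⟩
  apply SSet.hom_ext
  intro n
  ext z
  obtain ⟨⟨α⟩, u⟩ := z
  obtain ⟨m, rfl⟩ : ∃ m, n = Opposite.op (SimplexCategory.mk m) :=
    ⟨n.unop.len, by rw [SimplexCategory.mk_len, Opposite.op_unop]⟩
  show f.app _ (ULift.up α, u)
      = f.app _ (ULift.up ((α ≫ SimplexCategory.σ i) ≫ SimplexCategory.δ i.succ), u)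
  rw [Category.assoc]
  exact key X U hX p i f h H _ m α u le_rfl
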